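/- Fix λ > 0. Define, for a probability measure ρ on ℝ, the probability measure Σ(ρ) = Σ_{n=0}^∞ (e^{−λ} λ^n / n!) · (h_{n+1})_*(ρ^{∗(n+1)}), where ρ^{∗m} is the m-fold convolution power of ρ, h_k : ℝ → ℝ is y ↦ y/k, and (h_k)_* is the pushforward. Then the map ρ ↦ Σ(ρ) is sequentially continuous on probability measures on ℝ: if ∫ φ dρ_n → ∫ φ dρ for every continuous compactly supported φ : ℝ → ℝ, then ∫ φ dΣ(ρ_n) → ∫ φ dΣ(ρ) for every continuous compactly supported φ. -/

import Mathlib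

open MeasureTheory Filter
open scoped BoundedContinuousFunction

/-- The `n`-fold convolution power of a measure on `ℝ`, with `ρ^{∗0} = δ₀`. -/
noncomputable def convPow (ρ : Measure ℝ) : ℕ → Measure ℝ
  | 0 => Measure.dirac 0
  | n + 1 => (convPow ρ n).conv ρ

/-- `Σ(ρ) = Σ_{n=0}^∞ (e^{−λ} λ^n / n!) · (h_{n+1})_*(ρ^{∗(n+1)})`,
where `h_k(y) = y/k`. -/
noncomputable def SigmaTot (l : ℝ) (ρ : Measure ℝ) : Measure ℝ :=
  Measure.sum (fun n : ℕ =>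
    ENNReal.ofReal (Real.exp (-l) * l ^ n / n.factorial) •
      (convPow ρ (n + 1)).map (fun y => y / ((n : ℝ) + 1)))

/-- Vague convergence: convergence of the integrals against every continuous
compactly supported test function. -/
def VagueTendsto (ρs : ℕ → Measure ℝ) (ρ : Measure ℝ) : Prop :=
  ∀ φ : ℝ → ℝ, Continuous φ → HasCompactSupport φ →
    Tendsto (fun n => ∫ x, φ x ∂(ρs n)) atTop (nhds (∫ x, φ x ∂ρ))

/-! ### Auxiliary machinery -/

section Aux

/-- Weak convergence tested against bounded uniformly continuous functions. -/
def WT (μs : ℕ → Measure ℝ) (μ : Measure ℝ) : Prop :=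
  ∀ f : ℝ →ᵇ ℝ, UniformContinuous f →
    Tendsto (fun n => ∫ x, f x ∂(μs n)) atTop (nhds (∫ x, f x ∂μ))

lemma tendsto_of_forall_eventually_abs_le {a : ℕ → ℝ} {b : ℝ}
    (h : ∀ ε > 0, ∀ᶠ n in atTop, |a n - b| ≤ ε) : Tendsto a atTop (nhds b) := by
  rw [Metric.tendsto_atTop]
  intro ε hε
  obtain ⟨N, hN⟩ := eventually_atTop.mp (h (ε / 2) (by positivity))
  exact ⟨N, fun n hn => by
    have := hN n hn
    rw [Real.dist_eq]
    linarith⟩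

lemma eventually_abs_le_of_tendsto {a : ℕ → ℝ} {b ε : ℝ} (hε : 0 < ε)
    (h : Tendsto a atTop (nhds b)) : ∀ᶠ n in atTop, |a n - b| ≤ ε := by
  filter_upwards [Metric.tendsto_nhds.mp h ε hε] with n hn
  rw [Real.dist_eq] at hn
  exact hn.le

/-! #### Cutoff functions -/

/-- A piecewise-linear cutoff : equal to `1` on `[-R, R]`, supported in `[-(R+1), R+1]`. -/
noncomputable def cut (R : ℝ) : ℝ → ℝ := fun x => max 0 (min 1 (R + 1 - |x|))

lemma cut_continuous (R : ℝ) : Continuous (cut R) := by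
  unfold cut; fun_prop

lemma cut_nonneg (R x : ℝ) : 0 ≤ cut R x := le_max_left _ _

lemma cut_le_one (R x : ℝ) : cut R x ≤ 1 :=
  max_le (by norm_num) (min_le_left _ _)

lemma cut_eq_one {R x : ℝ} (h : |x| ≤ R) : cut R x = 1 := by
  unfold cut
  rw [min_eq_left (by linarith), max_eq_right (by norm_num)]

lemma cut_eq_zero {R x : ℝ} (h : R + 1 ≤ |x|) : cut R x = 0 := by
  unfold cut
  rw [min_eq_right (by linarith), max_eq_left (by linarith)]

lemma cut_hcs (R : ℝ) : HasCompactSupport (cut R) := by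
  apply HasCompactSupport.intro (isCompact_Icc (a := -(R + 1)) (b := R + 1))
  intro x hx
  simp only [Set.mem_Icc, not_and_or, not_le] at hx
  apply cut_eq_zero
  rcases hx with h | h
  · calc R + 1 ≤ -x := by linarith
      _ ≤ |x| := neg_le_abs x
  · exact h.le.trans (le_abs_self x)

lemma cut_lipschitz (R x y : ℝ) : |cut R x - cut R y| ≤ |x - y| := by
  unfold cut
  calc |max 0 (min 1 (R + 1 - |x|)) - max 0 (min 1 (R + 1 - |y|))|
      = |max (min 1 (R + 1 - |x|)) 0 - max (min 1 (R + 1 - |y|)) 0| := by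
        rw [max_comm 0 _, max_comm 0 _]
    _ ≤ |min 1 (R + 1 - |x|) - min 1 (R + 1 - |y|)| := abs_max_sub_max_le_abs _ _ _
    _ ≤ |(R + 1 - |x|) - (R + 1 - |y|)| := by
        have h := abs_min_sub_min_le_max (1 : ℝ) (R + 1 - |x|) (1 : ℝ) (R + 1 - |y|)
        rwa [sub_self, abs_zero, max_eq_right (abs_nonneg _)] at h
    _ ≤ |x - y| := by
        have h2 : (R + 1 - |x|) - (R + 1 - |y|) = |y| - |x| := by ring
        rw [h2]
        exact (abs_abs_sub_abs_le_abs_sub y x).trans (le_of_eq (abs_sub_comm y x))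

lemma cut_uc (R : ℝ) : UniformContinuous (cut R) :=
  Metric.uniformContinuous_iff.mpr fun ε hε =>
    ⟨ε, hε, fun {a b} h => by
      rw [Real.dist_eq] at h ⊢
      exact lt_of_le_of_lt (cut_lipschitz R a b) h⟩

/-- The cutoff as a bounded continuous function. -/
noncomputable def cutB (R : ℝ) : ℝ →ᵇ ℝ :=
  BoundedContinuousFunction.ofNormedAddCommGroup (cut R) (cut_continuous R) 1
    (fun x => by
      rw [Real.norm_eq_abs, abs_of_nonneg (cut_nonneg R x)]
      exact cut_le_one R x)

lemma cutB_coe (R : ℝ) : ⇑(cutB R) = cut R := rfl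

/-! #### Tail estimates -/

lemma tail_mono (μ : Measure ℝ) [IsFiniteMeasure μ] {r R : ℝ} (h : r ≤ R) :
    (μ (Set.Icc (-R) R)ᶜ).toReal ≤ (μ (Set.Icc (-r) r)ᶜ).toReal :=
  ENNReal.toReal_mono (measure_ne_top _ _)
    (measure_mono (Set.compl_subset_compl.mpr (Set.Icc_subset_Icc (neg_le_neg h) h)))

lemma exists_tail_small (μ : Measure ℝ) [IsProbabilityMeasure μ] {ε : ℝ} (hε : 0 < ε) :
    ∃ R : ℝ, 0 < R ∧ (μ (Set.Icc (-R) R)ᶜ).toReal ≤ ε := by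
  have hmono : Antitone (fun n : ℕ => (Set.Icc (-(n : ℝ)) (n : ℝ))ᶜ) := fun n m hnm =>
    Set.compl_subset_compl.mpr
      (Set.Icc_subset_Icc (neg_le_neg (Nat.cast_le.mpr hnm)) (Nat.cast_le.mpr hnm))
  have hinter : (⋂ n : ℕ, (Set.Icc (-(n : ℝ)) (n : ℝ))ᶜ) = ∅ := by
    ext x
    simp only [Set.mem_iInter, Set.mem_compl_iff, Set.mem_Icc, Set.mem_empty_iff_false,
      iff_false, not_forall, not_not]
    obtain ⟨n, hn⟩ := exists_nat_gt |x|
    obtain ⟨h1, h2⟩ := abs_le.mp hn.le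
    exact ⟨n, h1, h2⟩
  have htend := tendsto_measure_iInter_atTop
    (μ := μ) (s := fun n : ℕ => (Set.Icc (-(n : ℝ)) (n : ℝ))ᶜ)
    (fun n => (measurableSet_Icc.compl).nullMeasurableSet) hmono ⟨0, measure_ne_top _ _⟩
  rw [hinter, measure_empty] at htend
  have hev : ∀ᶠ n : ℕ in atTop, μ (Set.Icc (-(n : ℝ)) (n : ℝ))ᶜ < ENNReal.ofReal ε := by
    have := htend (Iio_mem_nhds (show (0 : ENNReal) < ENNReal.ofReal ε from
      ENNReal.ofReal_pos.mpr hε))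
    simpa using this
  obtain ⟨n, hn⟩ := hev.exists
  refine ⟨max (n : ℝ) 1, lt_of_lt_of_le one_pos (le_max_right _ _), ?_⟩
  refine le_trans (tail_mono μ (le_max_left (n : ℝ) 1)) ?_
  exact ENNReal.toReal_le_of_le_ofReal hε.le hn.le

lemma tail_le_one_sub_integral (μ : Measure ℝ) [IsProbabilityMeasure μ] (R : ℝ) :
    (μ (Set.Icc (-(R + 1)) (R + 1))ᶜ).toReal ≤ 1 - ∫ x, cut R x ∂μ := by
  have hint : Integrable (cut R) μ := by
    have := (cutB R).integrable μ
    rwa [cutB_coe] at this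
  have hind : Integrable ((Set.Icc (-(R + 1)) (R + 1))ᶜ.indicator (fun _ => (1 : ℝ))) μ :=
    (integrable_const (1 : ℝ)).indicator measurableSet_Icc.compl
  have h1 : ∫ x, ((Set.Icc (-(R + 1)) (R + 1))ᶜ.indicator (fun _ => (1 : ℝ))) x ∂μ
      = (μ (Set.Icc (-(R + 1)) (R + 1))ᶜ).toReal := by
    rw [integral_indicator_const (1 : ℝ) measurableSet_Icc.compl, smul_eq_mul, mul_one]; rfl
  have hle : ∀ x, ((Set.Icc (-(R + 1)) (R + 1))ᶜ.indicator (fun _ => (1 : ℝ))) x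
      ≤ 1 - cut R x := by
    intro x
    by_cases hx : x ∈ (Set.Icc (-(R + 1)) (R + 1))ᶜ
    · rw [Set.indicator_of_mem hx]
      have : cut R x = 0 := by
        apply cut_eq_zero
        simp only [Set.mem_compl_iff, Set.mem_Icc, not_and_or, not_le] at hx
        rcases hx with h | h
        · calc R + 1 ≤ -x := by linarith
          _ ≤ |x| := neg_le_abs x
        · exact h.le.trans (le_abs_self x)
      rw [this]; norm_num
    · rw [Set.indicator_of_notMem hx]
      linarith [cut_le_one R x]
  calc (μ (Set.Icc (-(R + 1)) (R + 1))ᶜ).toReal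
      = ∫ x, ((Set.Icc (-(R + 1)) (R + 1))ᶜ.indicator (fun _ => (1 : ℝ))) x ∂μ := h1.symm
    _ ≤ ∫ x, (1 - cut R x) ∂μ := integral_mono hind ((integrable_const 1).sub hint) hle
    _ = 1 - ∫ x, cut R x ∂μ := by
        rw [integral_sub (integrable_const 1) hint, integral_const]
        simp

lemma one_sub_integral_cut_le (μ : Measure ℝ) [IsProbabilityMeasure μ] (R : ℝ) :
    1 - ∫ x, cut R x ∂μ ≤ (μ (Set.Icc (-R) R)ᶜ).toReal := by
  have hint : Integrable (cut R) μ := by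
    have := (cutB R).integrable μ
    rwa [cutB_coe] at this
  have hind : Integrable ((Set.Icc (-R) R)ᶜ.indicator (fun _ => (1 : ℝ))) μ :=
    (integrable_const (1 : ℝ)).indicator measurableSet_Icc.compl
  have h1 : ∫ x, ((Set.Icc (-R) R)ᶜ.indicator (fun _ => (1 : ℝ))) x ∂μ
      = (μ (Set.Icc (-R) R)ᶜ).toReal := by
    rw [integral_indicator_const (1 : ℝ) measurableSet_Icc.compl, smul_eq_mul, mul_one]; rfl
  have hle : ∀ x, 1 - cut R x ≤ ((Set.Icc (-R) R)ᶜ.indicator (fun _ => (1 : ℝ))) x := by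
    intro x
    by_cases hx : x ∈ (Set.Icc (-R) R)ᶜ
    · rw [Set.indicator_of_mem hx]
      linarith [cut_nonneg R x]
    · rw [Set.indicator_of_notMem hx]
      simp only [Set.notMem_compl_iff, Set.mem_Icc] at hx
      have : cut R x = 1 := cut_eq_one (abs_le.mpr ⟨by linarith [hx.1], hx.2⟩)
      rw [this]; norm_num
  calc 1 - ∫ x, cut R x ∂μ
      = ∫ x, (1 - cut R x) ∂μ := by
        rw [integral_sub (integrable_const 1) hint, integral_const]; simp
    _ ≤ ∫ x, ((Set.Icc (-R) R)ᶜ.indicator (fun _ => (1 : ℝ))) x ∂μ :=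
        integral_mono ((integrable_const 1).sub hint) hind hle
    _ = _ := h1

/-! #### Vague implies weak (for probability limits) -/

lemma wt_of_vague {ρs : ℕ → Measure ℝ} {ρ : Measure ℝ} [IsProbabilityMeasure ρ]
    (hρs : ∀ n, IsProbabilityMeasure (ρs n)) (hv : VagueTendsto ρs ρ) : WT ρs ρ := by
  intro f _
  apply tendsto_of_forall_eventually_abs_le
  intro ε hε
  set M : ℝ := ‖f‖ + 1 with hMdef
  have hM1 : 1 ≤ M := le_add_of_nonneg_left (norm_nonneg f)
  have hM0 : 0 < M := lt_of_lt_of_le one_pos hM1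
  set ε' := ε / (4 * M) with hε'def
  have hε'0 : 0 < ε' := by positivity
  obtain ⟨R, hR0, hRt⟩ := exists_tail_small ρ hε'0
  have hfM : ∀ x, |f x| ≤ M := fun x => by
    have := f.norm_coe_le_norm x
    rw [Real.norm_eq_abs] at this
    linarith
  -- key estimate, valid for every probability measure
  have key : ∀ (μ : Measure ℝ), IsProbabilityMeasure μ →
      |∫ x, f x ∂μ - ∫ x, f x * cut R x ∂μ| ≤ M * (1 - ∫ x, cut R x ∂μ) := by
    intro μ hμ
    have hint_f : Integrable (⇑f) μ := f.integrable μ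
    have hint_c : Integrable (cut R) μ := by
      have := (cutB R).integrable μ; rwa [cutB_coe] at this
    have hint_g : Integrable (fun x => f x * cut R x) μ := by
      have := (f * cutB R).integrable μ
      exact this
    have hint_b : Integrable (fun x => M * (1 - cut R x)) μ :=
      ((integrable_const 1).sub hint_c).const_mul M
    have hint_sub : Integrable (fun x => f x - f x * cut R x) μ := by
      simpa only [Pi.sub_def] using hint_f.sub hint_g
    rw [← integral_sub hint_f hint_g]
    calc |∫ x, (f x - f x * cut R x) ∂μ|
        ≤ ∫ x, |f x - f x * cut R x| ∂μ := by
          simpa only [Real.norm_eq_abs] using norm_integral_le_integral_norm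
            (μ := μ) (fun x => f x - f x * cut R x)
      _ ≤ ∫ x, M * (1 - cut R x) ∂μ := by
          apply integral_mono hint_sub.abs hint_b
          intro x
          show |f x - f x * cut R x| ≤ M * (1 - cut R x)
          have h1 : f x - f x * cut R x = f x * (1 - cut R x) := by ring
          rw [h1, abs_mul,
            abs_of_nonneg (by linarith [cut_le_one R x] : (0:ℝ) ≤ 1 - cut R x)]
          exact mul_le_mul_of_nonneg_right (hfM x) (by linarith [cut_le_one R x])
      _ = M * (1 - ∫ x, cut R x ∂μ) := by
          rw [integral_const_mul, integral_sub (integrable_const 1) hint_c, integral_const]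
          simp
  have hg : Tendsto (fun n => ∫ x, f x * cut R x ∂(ρs n)) atTop
      (nhds (∫ x, f x * cut R x ∂ρ)) :=
    hv _ (f.continuous.mul (cut_continuous R)) ((cut_hcs R).mul_left)
  have hχ : Tendsto (fun n => ∫ x, cut R x ∂(ρs n)) atTop (nhds (∫ x, cut R x ∂ρ)) :=
    hv _ (cut_continuous R) (cut_hcs R)
  have hρtail : 1 - ∫ x, cut R x ∂ρ ≤ ε' := (one_sub_integral_cut_le ρ R).trans hRt
  filter_upwards [eventually_abs_le_of_tendsto hε'0 hg,
    eventually_abs_le_of_tendsto hε'0 hχ] with n h1 h2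
  haveI := hρs n
  have k1 := key (ρs n) (hρs n)
  have k2 := key ρ inferInstance
  have h2' : 1 - ∫ x, cut R x ∂(ρs n) ≤ 2 * ε' := by
    have := abs_le.mp h2
    linarith [this.1]
  have tri : |∫ x, f x ∂(ρs n) - ∫ x, f x ∂ρ|
      ≤ |∫ x, f x ∂(ρs n) - ∫ x, f x * cut R x ∂(ρs n)|
        + |∫ x, f x * cut R x ∂(ρs n) - ∫ x, f x * cut R x ∂ρ|
        + |∫ x, f x * cut R x ∂ρ - ∫ x, f x ∂ρ| := by
    have := abs_sub_le (∫ x, f x ∂(ρs n)) (∫ x, f x * cut R x ∂(ρs n)) (∫ x, f x ∂ρ)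
    have h4 := abs_sub_le (∫ x, f x * cut R x ∂(ρs n)) (∫ x, f x * cut R x ∂ρ) (∫ x, f x ∂ρ)
    linarith
  have k2' : |∫ x, f x * cut R x ∂ρ - ∫ x, f x ∂ρ| ≤ M * (1 - ∫ x, cut R x ∂ρ) := by
    rw [abs_sub_comm]; exact k2
  have hbound : |∫ x, f x ∂(ρs n) - ∫ x, f x ∂ρ| ≤ M * (2 * ε') + ε' + M * ε' := by
    have e1 : |∫ x, f x ∂(ρs n) - ∫ x, f x * cut R x ∂(ρs n)| ≤ M * (2 * ε') :=
      k1.trans (mul_le_mul_of_nonneg_left h2' hM0.le)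
    have e3 : |∫ x, f x * cut R x ∂ρ - ∫ x, f x ∂ρ| ≤ M * ε' :=
      k2'.trans (mul_le_mul_of_nonneg_left hρtail hM0.le)
    linarith
  have : M * (2 * ε') + ε' + M * ε' ≤ ε := by
    have h8 : (4 : ℝ) * M * ε' = ε := by
      rw [hε'def]; field_simp
    nlinarith
  linarith

/-! #### Uniform tightness of a weakly convergent sequence -/

lemma wt_tight {μs : ℕ → Measure ℝ} {μ : Measure ℝ} [IsProbabilityMeasure μ]
    (hμs : ∀ n, IsProbabilityMeasure (μs n)) (h : WT μs μ) {ε : ℝ} (hε : 0 < ε) :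
    ∃ R : ℝ, 0 < R ∧ ∀ n, ((μs n) (Set.Icc (-R) R)ᶜ).toReal ≤ ε := by
  have hε2 : 0 < ε / 2 := by positivity
  obtain ⟨R₀, hR₀0, hR₀⟩ := exists_tail_small μ hε2
  have hχ := h (cutB R₀) (by rw [cutB_coe]; exact cut_uc R₀)
  simp only [cutB_coe] at hχ
  have hlim : 1 - ∫ x, cut R₀ x ∂μ ≤ ε / 2 := (one_sub_integral_cut_le μ R₀).trans hR₀
  obtain ⟨N, hN⟩ := eventually_atTop.mp (eventually_abs_le_of_tendsto hε2 hχ)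
  have hch : ∀ n, ∃ r : ℝ, 0 < r ∧ ((μs n) (Set.Icc (-r) r)ᶜ).toReal ≤ ε := fun n => by
    haveI := hμs n
    exact exists_tail_small (μs n) hε
  choose r hr0 hrt using hch
  have hsum0 : 0 ≤ ∑ i ∈ Finset.range N, r i :=
    Finset.sum_nonneg fun i _ => (hr0 i).le
  refine ⟨(R₀ + 1) + ∑ i ∈ Finset.range N, r i, by linarith, fun n => ?_⟩
  haveI := hμs n
  rcases lt_or_ge n N with hn | hn
  · have hrn : r n ≤ (R₀ + 1) + ∑ i ∈ Finset.range N, r i := by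
      have := Finset.single_le_sum (f := r) (fun i _ => (hr0 i).le) (Finset.mem_range.mpr hn)
      linarith
    exact (tail_mono (μs n) hrn).trans (hrt n)
  · have h1 : 1 - ∫ x, cut R₀ x ∂(μs n) ≤ ε := by
      have := abs_le.mp (hN n hn)
      linarith [this.1]
    have h2 : ((μs n) (Set.Icc (-(R₀ + 1)) (R₀ + 1))ᶜ).toReal ≤ ε :=
      (tail_le_one_sub_integral (μs n) R₀).trans h1
    exact (tail_mono (μs n) (by linarith)).trans h2

/-! #### Convolution against bounded test functions -/

lemma fb_bound (f : ℝ →ᵇ ℝ) (ν : Measure ℝ) [IsProbabilityMeasure ν] (x : ℝ) :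
    ‖∫ y, f (x + y) ∂ν‖ ≤ ‖f‖ := by
  have := norm_integral_le_of_norm_le_const (μ := ν) (C := ‖f‖)
    (f := fun y => f (x + y)) (ae_of_all _ fun y => f.norm_coe_le_norm _)
  simpa [measure_univ] using this

/-- `Fb f ν x = ∫ f (x + y) dν(y)` as a bounded continuous function of `x`. -/
noncomputable def Fb (f : ℝ →ᵇ ℝ) (ν : Measure ℝ) [IsProbabilityMeasure ν] : ℝ →ᵇ ℝ :=
  BoundedContinuousFunction.ofNormedAddCommGroup (fun x => ∫ y, f (x + y) ∂ν)
    (continuous_of_dominated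
      (fun x => (f.continuous.comp (continuous_const.add continuous_id)).aestronglyMeasurable)
      (fun x => ae_of_all _ fun y => f.norm_coe_le_norm _)
      (integrable_const ‖f‖)
      (ae_of_all _ fun y => f.continuous.comp (continuous_id.add continuous_const)))
    ‖f‖ (fun x => fb_bound f ν x)

lemma Fb_apply (f : ℝ →ᵇ ℝ) (ν : Measure ℝ) [IsProbabilityMeasure ν] (x : ℝ) :
    Fb f ν x = ∫ y, f (x + y) ∂ν := rfl

lemma Fb_integrand_integrable (f : ℝ →ᵇ ℝ) (ν : Measure ℝ) [IsProbabilityMeasure ν] (z : ℝ) :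
    Integrable (fun y => f (z + y)) ν := by
  have := (f.compContinuous (⟨fun y => z + y, by continuity⟩ : C(ℝ, ℝ))).integrable ν
  exact this

lemma Fb_dist_le (f : ℝ →ᵇ ℝ) (ν : Measure ℝ) [IsProbabilityMeasure ν] {x x' ε : ℝ}
    (h : ∀ y, ‖f (x + y) - f (x' + y)‖ ≤ ε) : ‖Fb f ν x - Fb f ν x'‖ ≤ ε := by
  rw [Fb_apply, Fb_apply,
    ← integral_sub (Fb_integrand_integrable f ν x) (Fb_integrand_integrable f ν x')]
  have := norm_integral_le_of_norm_le_const (μ := ν) (ae_of_all _ h)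
  simpa [measure_univ] using this

lemma Fb_uc (f : ℝ →ᵇ ℝ) (hf : UniformContinuous f) (ν : Measure ℝ)
    [IsProbabilityMeasure ν] : UniformContinuous (Fb f ν) := by
  rw [Metric.uniformContinuous_iff] at hf ⊢
  intro ε hε
  obtain ⟨δ, hδ0, hδ⟩ := hf (ε / 2) (by positivity)
  refine ⟨δ, hδ0, fun {a b} hab => ?_⟩
  have hle : ‖Fb f ν a - Fb f ν b‖ ≤ ε / 2 := by
    apply Fb_dist_le f ν
    intro y
    have hd : dist (a + y) (b + y) < δ := by rwa [dist_add_right]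
    have := (hδ hd).le
    rwa [dist_eq_norm] at this
  rw [dist_eq_norm]
  linarith

lemma integral_conv (μ ν : Measure ℝ) [IsProbabilityMeasure μ] [IsProbabilityMeasure ν]
    (f : ℝ →ᵇ ℝ) : ∫ x, f x ∂(μ.conv ν) = ∫ x, Fb f ν x ∂μ := by
  have hconv : μ.conv ν = (μ.prod ν).map (fun p : ℝ × ℝ => p.1 + p.2) := rfl
  have hmeas : AEMeasurable (fun p : ℝ × ℝ => p.1 + p.2) (μ.prod ν) :=
    (measurable_fst.add measurable_snd).aemeasurable
  rw [hconv, integral_map hmeas f.continuous.aestronglyMeasurable]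
  have hint : Integrable (fun p : ℝ × ℝ => f (p.1 + p.2)) (μ.prod ν) := by
    have := (f.compContinuous
      (⟨fun p : ℝ × ℝ => p.1 + p.2, by continuity⟩ : C(ℝ × ℝ, ℝ))).integrable (μ.prod ν)
    exact this
  rw [MeasureTheory.integral_prod _ hint]
  rfl

/-! #### Weak convergence is preserved by convolution -/

lemma wt_conv {μs νs : ℕ → Measure ℝ} {μ ν : Measure ℝ}
    [IsProbabilityMeasure μ] [IsProbabilityMeasure ν]
    (hμp : ∀ n, IsProbabilityMeasure (μs n)) (hνp : ∀ n, IsProbabilityMeasure (νs n))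
    (hμ : WT μs μ) (hν : WT νs ν) :
    WT (fun n => (μs n).conv (νs n)) (μ.conv ν) := by
  intro f hf
  have hrw : ∀ n, ∫ x, f x ∂((μs n).conv (νs n)) = ∫ x, Fb f (νs n) x ∂(μs n) := fun n => by
    haveI := hμp n; haveI := hνp n
    exact integral_conv _ _ f
  simp only [hrw, integral_conv μ ν f]
  apply tendsto_of_forall_eventually_abs_le
  intro ε hε
  set M : ℝ := ‖f‖ + 1 with hMdef
  have hM1 : 1 ≤ M := le_add_of_nonneg_left (norm_nonneg f)
  have hM0 : 0 < M := lt_of_lt_of_le one_pos hM1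
  set ε' := ε / (8 * M) with hε'def
  have hε'0 : 0 < ε' := by positivity
  obtain ⟨R, hR0, hRt⟩ := wt_tight hμp hμ hε'0
  set K := Set.Icc (-R) R with hKdef
  have hKc : IsCompact K := isCompact_Icc
  obtain ⟨δ, hδ0, hδ⟩ := Metric.uniformContinuous_iff.mp hf ε' hε'0
  -- equicontinuity of the family `Fb f ν'`
  have equic : ∀ (ν' : Measure ℝ) (_ : IsProbabilityMeasure ν') (x x' : ℝ),
      dist x x' < δ → ‖Fb f ν' x - Fb f ν' x'‖ ≤ ε' := by
    intro ν' hν' x x' hxx'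
    apply Fb_dist_le f ν'
    intro y
    have hd : dist (x + y) (x' + y) < δ := by rwa [dist_add_right]
    have := (hδ hd).le
    rwa [dist_eq_norm] at this
  -- finite δ-net of K
  have hcover : K ⊆ ⋃ x ∈ K, Metric.ball x δ := fun x hx =>
    Set.mem_biUnion hx (Metric.mem_ball_self hδ0)
  obtain ⟨t, htK, htfin, htcov⟩ :=
    hKc.elim_finite_subcover_image (fun x _ => Metric.isOpen_ball) hcover
  -- pointwise convergence of the integrals
  set G : ℕ → ℝ → ℝ := fun n x => ∫ y, f (x + y) ∂(νs n) with hGdef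
  have hFb_coe : ∀ (m : Measure ℝ) [IsProbabilityMeasure m],
      ⇑(Fb f m) = fun x => ∫ y, f (x + y) ∂m := fun m _ => rfl
  have hpt : ∀ x : ℝ, Tendsto (fun n => G n x) atTop (nhds (Fb f ν x)) := by
    intro x
    have huc : UniformContinuous
        (f.compContinuous (⟨fun y => x + y, by continuity⟩ : C(ℝ, ℝ))) := by
      rw [BoundedContinuousFunction.coe_compContinuous]
      apply hf.comp
      exact Metric.uniformContinuous_iff.mpr fun ε hε =>
        ⟨ε, hε, fun {a b} h => by rwa [ContinuousMap.coe_mk, dist_add_left]⟩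
    have h0 := hν _ huc
    simp only [BoundedContinuousFunction.coe_compContinuous, ContinuousMap.coe_mk,
      Function.comp_def] at h0
    exact h0
  -- convergence at the points of the net, simultaneously
  have Enet : ∀ᶠ n in atTop, ∀ x ∈ t, ‖G n x - Fb f ν x‖ ≤ ε' := by
    rw [eventually_all_finite htfin]
    intro x _
    have := eventually_abs_le_of_tendsto hε'0 (hpt x)
    simpa [Real.norm_eq_abs] using this
  -- uniform convergence on K
  have EK : ∀ᶠ n in atTop, ∀ x ∈ K, ‖G n x - Fb f ν x‖ ≤ 3 * ε' := by
    filter_upwards [Enet] with n hn x hx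
    obtain ⟨i, hit, hxi⟩ := Set.mem_iUnion₂.mp (htcov hx)
    have hdxi : dist x i < δ := Metric.mem_ball.mp hxi
    haveI := hνp n
    have e1 : ‖G n x - G n i‖ ≤ ε' := by
      have := equic (νs n) inferInstance x i hdxi
      rw [hFb_coe (νs n)] at this
      exact this
    have e2 : ‖G n i - Fb f ν i‖ ≤ ε' := hn i hit
    have e3 : ‖Fb f ν i - Fb f ν x‖ ≤ ε' := by
      have hdix : dist i x < δ := by rwa [dist_comm]
      exact equic ν inferInstance i x hdix
    calc ‖G n x - Fb f ν x‖
        = ‖(G n x - G n i) + (G n i - Fb f ν i) + (Fb f ν i - Fb f ν x)‖ := by ring_nf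
      _ ≤ ‖(G n x - G n i) + (G n i - Fb f ν i)‖ + ‖Fb f ν i - Fb f ν x‖ := norm_add_le _ _
      _ ≤ ‖G n x - G n i‖ + ‖G n i - Fb f ν i‖ + ‖Fb f ν i - Fb f ν x‖ := by
          have := norm_add_le (G n x - G n i) (G n i - Fb f ν i)
          linarith
      _ ≤ ε' + ε' + ε' := by linarith
      _ = 3 * ε' := by ring
  -- second term : weak convergence against `Fb f ν`
  have E2 : ∀ᶠ n in atTop, |(∫ x, Fb f ν x ∂(μs n)) - ∫ x, Fb f ν x ∂μ| ≤ ε' :=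
    eventually_abs_le_of_tendsto hε'0 (hμ (Fb f ν) (Fb_uc f hf ν))
  -- put everything together
  filter_upwards [EK, E2] with n hEK hE2
  haveI := hμp n; haveI := hνp n
  set g : ℝ → ℝ := fun x => G n x - Fb f ν x with hgdef
  have hg_cont : Continuous g := by
    have h1 : Continuous (G n) := by
      have := (Fb f (νs n)).continuous
      rwa [hFb_coe (νs n)] at this
    exact h1.sub (Fb f ν).continuous
  have hint_Gn : Integrable (G n) (μs n) := by
    have := (Fb f (νs n)).integrable (μs n)
    rwa [hFb_coe (νs n)] at this
  have hint_F : Integrable (⇑(Fb f ν)) (μs n) := (Fb f ν).integrable (μs n)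
  have hgint : Integrable g (μs n) := hint_Gn.sub hint_F
  have hsplit : ∫ x, g x ∂(μs n)
      = (∫ x in K, g x ∂(μs n)) + ∫ x in Kᶜ, g x ∂(μs n) :=
    (integral_add_compl measurableSet_Icc hgint).symm
  have hKbound : ‖∫ x in K, g x ∂(μs n)‖ ≤ 3 * ε' := by
    have h1 := norm_setIntegral_le_of_norm_le_const (μ := μs n) (s := K) (C := 3 * ε')
      (measure_lt_top _ _) (fun x hx => hEK x hx)
    have h2 : ((μs n) K).toReal ≤ 1 := by
      have := ENNReal.toReal_mono (by simp) (prob_le_one (μ := μs n) (s := K))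
      simpa using this
    calc ‖∫ x in K, g x ∂(μs n)‖ ≤ 3 * ε' * ((μs n) K).toReal := h1
      _ ≤ 3 * ε' * 1 := by
          apply mul_le_mul_of_nonneg_left h2 (by positivity)
      _ = 3 * ε' := by ring
  have hKcbound : ‖∫ x in Kᶜ, g x ∂(μs n)‖ ≤ 2 * M * ε' := by
    have hb : ∀ x ∈ Kᶜ, ‖g x‖ ≤ 2 * M := by
      intro x _
      have h1 : ‖G n x‖ ≤ ‖f‖ := fb_bound f (νs n) x
      have h2 : ‖Fb f ν x‖ ≤ ‖f‖ := fb_bound f ν x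
      calc ‖g x‖ ≤ ‖G n x‖ + ‖Fb f ν x‖ := norm_sub_le _ _
        _ ≤ ‖f‖ + ‖f‖ := add_le_add h1 h2
        _ ≤ 2 * M := by rw [hMdef]; linarith [norm_nonneg f]
    have h1 := norm_setIntegral_le_of_norm_le_const (μ := μs n) (s := Kᶜ) (C := 2 * M)
      (measure_lt_top _ _) hb
    calc ‖∫ x in Kᶜ, g x ∂(μs n)‖ ≤ 2 * M * ((μs n) Kᶜ).toReal := h1
      _ ≤ 2 * M * ε' := mul_le_mul_of_nonneg_left (hRt n) (by positivity)
  have hfirst : |(∫ x, G n x ∂(μs n)) - ∫ x, Fb f ν x ∂(μs n)| ≤ 3 * ε' + 2 * M * ε' := by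
    have h0 : (∫ x, G n x ∂(μs n)) - ∫ x, Fb f ν x ∂(μs n) = ∫ x, g x ∂(μs n) :=
      (integral_sub hint_Gn hint_F).symm
    rw [h0, hsplit, ← Real.norm_eq_abs]
    calc ‖(∫ x in K, g x ∂(μs n)) + ∫ x in Kᶜ, g x ∂(μs n)‖
        ≤ ‖∫ x in K, g x ∂(μs n)‖ + ‖∫ x in Kᶜ, g x ∂(μs n)‖ := norm_add_le _ _
      _ ≤ 3 * ε' + 2 * M * ε' := add_le_add hKbound hKcbound
  have hGn_eq : ∫ x, Fb f (νs n) x ∂(μs n) = ∫ x, G n x ∂(μs n) := by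
    rw [hFb_coe (νs n)]
  rw [hGn_eq]
  have htri : |(∫ x, G n x ∂(μs n)) - ∫ x, Fb f ν x ∂μ|
      ≤ |(∫ x, G n x ∂(μs n)) - ∫ x, Fb f ν x ∂(μs n)|
        + |(∫ x, Fb f ν x ∂(μs n)) - ∫ x, Fb f ν x ∂μ| :=
    abs_sub_le _ _ _
  have hfin : 3 * ε' + 2 * M * ε' + ε' ≤ ε := by
    have h8 : (8 : ℝ) * M * ε' = ε := by rw [hε'def]; field_simp
    nlinarith
  linarith

/-! #### Convolution powers -/

lemma convPow_prob (ρ : Measure ℝ) [IsProbabilityMeasure ρ] :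
    ∀ m, IsProbabilityMeasure (convPow ρ m)
  | 0 => by rw [convPow]; infer_instance
  | m + 1 => by
      rw [convPow]
      haveI := convPow_prob ρ m
      infer_instance

lemma wt_convPow {ρs : ℕ → Measure ℝ} {ρ : Measure ℝ} [IsProbabilityMeasure ρ]
    (hρs : ∀ n, IsProbabilityMeasure (ρs n)) (h : WT ρs ρ) :
    ∀ m, WT (fun n => convPow (ρs n) m) (convPow ρ m)
  | 0 => by
      intro f hf
      simp only [convPow]
      exact tendsto_const_nhds
  | m + 1 => by
      have ih := wt_convPow hρs h m
      haveI := convPow_prob ρ m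
      have := wt_conv (μs := fun n => convPow (ρs n) m) (νs := ρs)
        (fun n => by haveI := hρs n; exact convPow_prob (ρs n) m) hρs ih h
      intro f hf
      simp only [convPow]
      exact this f hf

/-! ### Main theorem -/

theorem SigmaTot_sequentially_continuous
    (l : ℝ) (hl : 0 < l)
    (ρ : Measure ℝ) (ρs : ℕ → Measure ℝ)
    (hρ : IsProbabilityMeasure ρ) (hρs : ∀ n, IsProbabilityMeasure (ρs n))
    (hconv : VagueTendsto ρs ρ) :
    VagueTendsto (fun n => SigmaTot l (ρs n)) (SigmaTot l ρ) := by
  haveI := hρ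
  intro φ hφc hφcs
  have hW : WT ρs ρ := wt_of_vague hρs hconv
  obtain ⟨C, hC⟩ := hφcs.exists_bound_of_continuous hφc
  have hC0 : 0 ≤ C := le_trans (norm_nonneg _) (hC 0)
  set φb : ℝ →ᵇ ℝ := BoundedContinuousFunction.ofNormedAddCommGroup φ hφc C hC with hφbdef
  have hφb_coe : ⇑φb = φ := rfl
  have hφuc : UniformContinuous φ := hφcs.uniformContinuous_of_continuous hφc
  set a : ℕ → ℝ := fun k => Real.exp (-l) * l ^ k / (k.factorial : ℝ) with hadef
  have ha0 : ∀ k : ℕ, 0 ≤ Real.exp (-l) * l ^ k / (k.factorial : ℝ) := fun k => by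
    have h1 : (0:ℝ) < Real.exp (-l) := Real.exp_pos _
    have h2 : (0:ℝ) ≤ l ^ k := le_of_lt (pow_pos hl k)
    have h3 : (0:ℝ) < (k.factorial : ℝ) := by exact_mod_cast k.factorial_pos
    positivity
  have hasum : Summable a := by
    have := (Real.summable_pow_div_factorial l).mul_left (Real.exp (-l))
    simpa [hadef, mul_div_assoc] using this
  have hmeas_h : ∀ k : ℕ, Measurable fun y : ℝ => y / ((k : ℝ) + 1) := fun k =>
    (continuous_id.div_const _).measurable
  -- the representation of the integral against `SigmaTot`
  have hrep : ∀ (μ : Measure ℝ), IsProbabilityMeasure μ →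
      ∫ x, φ x ∂(SigmaTot l μ)
        = ∑' k, a k * ∫ y, φ (y / ((k : ℝ) + 1)) ∂(convPow μ (k + 1)) := by
    intro μ hμ
    haveI := hμ
    haveI hfin : IsFiniteMeasure (SigmaTot l μ) := by
      constructor
      rw [SigmaTot, Measure.sum_apply _ MeasurableSet.univ]
      have huniv : ∀ k : ℕ,
          (ENNReal.ofReal (Real.exp (-l) * l ^ k / k.factorial) •
            ((convPow μ (k + 1)).map (fun y => y / ((k : ℝ) + 1)))) Set.univ
          = ENNReal.ofReal (a k) := by
        intro k
        haveI := convPow_prob μ (k + 1)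
        haveI : IsProbabilityMeasure ((convPow μ (k + 1)).map fun y => y / ((k : ℝ) + 1)) :=
          Measure.isProbabilityMeasure_map (hmeas_h k).aemeasurable
        simp [Measure.smul_apply, measure_univ, hadef]
      simp only [huniv]
      rw [← ENNReal.ofReal_tsum_of_nonneg ha0 hasum]
      exact ENNReal.ofReal_lt_top
    have hintφ : Integrable φ (SigmaTot l μ) :=
      hφc.integrable_of_hasCompactSupport hφcs
    rw [SigmaTot] at hintφ ⊢
    rw [integral_sum_measure hintφ]
    apply tsum_congr
    intro k
    rw [integral_smul_measure,
      integral_map (hmeas_h k).aemeasurable hφc.aestronglyMeasurable,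
      ENNReal.toReal_ofReal (ha0 k), smul_eq_mul]
  have hrw : (fun n => ∫ x, φ x ∂(SigmaTot l (ρs n)))
      = fun n => ∑' k, a k * ∫ y, φ (y / ((k : ℝ) + 1)) ∂(convPow (ρs n) (k + 1)) :=
    funext fun n => hrep (ρs n) (hρs n)
  rw [hrw, hrep ρ hρ]
  -- dominated convergence for the series
  apply tendsto_tsum_of_dominated_convergence (bound := fun k => a k * C)
    (hasum.mul_right C)
  · intro k
    have hdiv_uc : UniformContinuous fun y : ℝ => y / ((k : ℝ) + 1) := by
      have hk1 : (0:ℝ) < (k : ℝ) + 1 := by positivity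
      rw [Metric.uniformContinuous_iff]
      intro ε hε
      refine ⟨ε * ((k : ℝ) + 1), by positivity, fun {y y'} h => ?_⟩
      rw [Real.dist_eq] at h ⊢
      rw [div_sub_div_same, abs_div, abs_of_pos hk1, div_lt_iff₀ hk1]
      exact h
    set ψ : ℝ →ᵇ ℝ := φb.compContinuous
      (⟨fun y => y / ((k : ℝ) + 1), continuous_id.div_const _⟩ : C(ℝ, ℝ)) with hψdef
    have hψcoe : ⇑ψ = fun y => φ (y / ((k : ℝ) + 1)) := rfl
    have hψuc : UniformContinuous ⇑ψ := by
      rw [hψcoe]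
      exact hφuc.comp hdiv_uc
    have h0 := wt_convPow hρs hW (k + 1) ψ hψuc
    rw [hψcoe] at h0
    exact h0.const_mul (a k)
  · apply Eventually.of_forall
    intro n k
    haveI := hρs n
    haveI := convPow_prob (ρs n) (k + 1)
    have hI : ‖∫ y, φ (y / ((k : ℝ) + 1)) ∂(convPow (ρs n) (k + 1))‖ ≤ C := by
      have := norm_integral_le_of_norm_le_const
        (μ := convPow (ρs n) (k + 1)) (C := C)
        (f := fun y => φ (y / ((k : ℝ) + 1))) (ae_of_all _ fun y => hC _)
      simpa [measure_univ] using this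
    calc ‖a k * ∫ y, φ (y / ((k : ℝ) + 1)) ∂(convPow (ρs n) (k + 1))‖
        = a k * ‖∫ y, φ (y / ((k : ℝ) + 1)) ∂(convPow (ρs n) (k + 1))‖ := by
          rw [norm_mul, Real.norm_eq_abs (a k), abs_of_nonneg (ha0 k)]
      _ ≤ a k * C := mul_le_mul_of_nonneg_left hI (ha0 k)
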